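/- arXiv:1902.07002 — 4 statements merged into one kernel-verified Lean document; each statement's English description precedes it below -/
import Mathlib

section
/- Let R be a commutative Artinian local ring with maximal ideal m, let G be a group, and let X be an R-module equipped with an R-linear action of G that is free as an R-module. Fix a non-negative integer i. If the group cohomology H^i(G, X/mX) vanishes, then H^i(G, X) vanishes. -/
open groupCohomology CategoryTheory

variable {R : Type} [CommRing R] {G : Type} [Group G]

lemma subsingleton_iff_exactAt (A : Rep R G) (i : ℕ) :
    Subsingleton (groupCohomology A i) ↔ (inhomogeneousCochains A).ExactAt i := by
  rw [HomologicalComplex.exactAt_iff_isZero_homology]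
  constructor
  · intro h
    have h' : Subsingleton ((inhomogeneousCochains A).homology i) := h
    exact ModuleCat.isZero_of_subsingleton _
  · intro h
    have h0 : (𝟙 (groupCohomology A i)) = 0 := h.eq_of_src _ _
    refine ⟨fun a b => ?_⟩
    have : ∀ x : groupCohomology A i, x = 0 := by
      intro x
      calc x = (𝟙 (groupCohomology A i)) x := rfl
        _ = (0 : groupCohomology A i ⟶ groupCohomology A i) x := by rw [h0]
        _ = 0 := rfl
    rw [this a, this b]

lemma exactAt_iff_concrete (A : Rep R G) (i : ℕ) :
    (inhomogeneousCochains A).ExactAt i ↔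
      ∀ c : (Fin i → G) → A, inhomogeneousCochains.d A i c = 0 →
        ∃ b : (Fin (i-1) → G) → A, (inhomogeneousCochains A).d (i-1) i b = c := by
  rw [(inhomogeneousCochains A).exactAt_iff' (i-1) i (i+1) (by cases i <;> simp) (by simp),
    ShortComplex.moduleCat_exact_iff]
  have hd : ∀ c : (Fin i → G) → A, (inhomogeneousCochains A).d i (i+1) c
      = inhomogeneousCochains.d A i c := fun c =>
    ConcreteCategory.congr_hom (inhomogeneousCochains.d_def A i) c
  constructor
  · intro h c hc
    exact h c (by rw [show ((inhomogeneousCochains A).sc' (i-1) i (i+1)).g c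
      = (inhomogeneousCochains A).d i (i+1) c from rfl, hd]; exact hc)
  · intro h c hc
    exact h c ((hd c).symm.trans hc)

section ModuleLemmas
variable {M : Type} [AddCommGroup M] [Module R M] {ι : Type}

lemma repr_mem_of_mem_smul_top (b : Module.Basis ι R M) {I : Ideal R} {x : M}
    (hx : x ∈ I • (⊤ : Submodule R M)) (α : ι) : b.repr x α ∈ I := by
  refine Submodule.smul_induction_on hx (fun r hr y _ => ?_) (fun y z hy hz => ?_)
  · rw [map_smul]
    simpa using I.mul_mem_right _ hr
  · rw [map_add]
    exact I.add_mem hy hz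

lemma mem_smul_top_of_repr (b : Module.Basis ι R M) {I : Ideal R} {x : M} (h : ∀ α, b.repr x α ∈ I) :
    x ∈ I • (⊤ : Submodule R M) := by
  have hx := b.linearCombination_repr x
  rw [Finsupp.linearCombination_apply, Finsupp.sum] at hx
  rw [← hx]
  exact Submodule.sum_mem _ fun α _ => Submodule.smul_mem_smul (h α) Submodule.mem_top

lemma mem_max_smul_of_smul_mem [IsLocalRing R] (b : Module.Basis ι R M) {J' : Ideal R} {t : R} (ht : t ∉ J')
    {x : M} (h : t • x ∈ J' • (⊤ : Submodule R M)) :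
    x ∈ (IsLocalRing.maximalIdeal R) • (⊤ : Submodule R M) := by
  refine mem_smul_top_of_repr b fun α => ?_
  by_contra hα
  rw [IsLocalRing.mem_maximalIdeal, mem_nonunits_iff, not_not] at hα
  obtain ⟨u, hu⟩ := hα
  have h1 : t * b.repr x α ∈ J' := by
    have := repr_mem_of_mem_smul_top b h α
    simpa using this
  refine ht ?_
  have h2 : (t * b.repr x α) * ↑u⁻¹ ∈ J' := J'.mul_mem_right _ h1
  rwa [← hu, mul_assoc, Units.mul_inv, mul_one] at h2

lemma exists_of_mem_span_singleton_smul {t : R} {x : M}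
    (hx : x ∈ (Ideal.span {t} : Ideal R) • (⊤ : Submodule R M)) : ∃ y, x = t • y := by
  refine Submodule.smul_induction_on hx (fun r hr y _ => ?_) (fun y z hy hz => ?_)
  · obtain ⟨a, ha⟩ := Ideal.mem_span_singleton'.mp hr
    exact ⟨a • y, by rw [← ha, mul_comm, ← smul_smul]⟩
  · obtain ⟨y', hy'⟩ := hy
    obtain ⟨z', hz'⟩ := hz
    exact ⟨y' + z', by rw [hy', hz', smul_add]⟩

lemma exists_decomp {J' : Ideal R} {t : R} {x : M}
    (hx : x ∈ (J' ⊔ Ideal.span {t}) • (⊤ : Submodule R M)) :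
    ∃ y z, x = t • y + z ∧ z ∈ J' • (⊤ : Submodule R M) := by
  rw [Submodule.sup_smul] at hx
  obtain ⟨z, hz, w, hw, rfl⟩ := Submodule.mem_sup.mp hx
  obtain ⟨y, hy⟩ := exists_of_mem_span_singleton_smul hw
  exact ⟨y, z, by rw [hy, add_comm], hz⟩

lemma smul_mem_of_mem_max_smul [IsLocalRing R] {J' : Ideal R} {t : R}
    (htm : ∀ a ∈ IsLocalRing.maximalIdeal R, t * a ∈ J') {x : M}
    (hx : x ∈ (IsLocalRing.maximalIdeal R) • (⊤ : Submodule R M)) :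
    t • x ∈ J' • (⊤ : Submodule R M) := by
  refine Submodule.smul_induction_on hx (fun r hr y _ => ?_) (fun y z hy hz => ?_)
  · rw [smul_smul]
    exact Submodule.smul_mem_smul (htm r hr) Submodule.mem_top
  · rw [smul_add]
    exact Submodule.add_mem _ hy hz

end ModuleLemmas

section DLemmas
variable (A : Rep R G)

lemma rho_smul_top_mem (I : Ideal R) (g : G) {x : A} (hx : x ∈ I • (⊤ : Submodule R A)) :
    A.ρ g x ∈ I • (⊤ : Submodule R A) := by
  refine Submodule.smul_induction_on hx (fun r hr y _ => ?_) (fun y z hy hz => ?_)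
  · rw [map_smul]
    exact Submodule.smul_mem_smul hr Submodule.mem_top
  · rw [map_add]
    exact Submodule.add_mem _ hy hz

lemma d_mem (I : Ideal R) (n : ℕ) (c : (Fin n → G) → A)
    (hc : ∀ g, c g ∈ I • (⊤ : Submodule R A)) (g : Fin (n+1) → G) :
    inhomogeneousCochains.d A n c g ∈ I • (⊤ : Submodule R A) := by
  rw [inhomogeneousCochains.d_hom_apply]
  exact Submodule.add_mem _ (rho_smul_top_mem A I _ (hc _))
    (Submodule.sum_mem _ fun j _ => Submodule.smul_mem _ _ (hc _))

lemma d_comm {A} {B : Rep R G} (φ : A ⟶ B) (n : ℕ) (c : (Fin n → G) → A) :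
    inhomogeneousCochains.d B n (φ.hom ∘ c) = φ.hom ∘ inhomogeneousCochains.d A n c := by
  funext g
  simp only [inhomogeneousCochains.d_hom_apply, Function.comp_apply, map_add, map_sum, map_smul]
  congr 1
  exact (Rep.hom_comm_apply φ _ _).symm

lemma rho_smul_top_mem' (A : Rep R G) (I : Ideal R) (g : G) {x : A}
    (hx : x ∈ I • (⊤ : Submodule R A)) : A.ρ g x ∈ I • (⊤ : Submodule R A) := by
  refine Submodule.smul_induction_on hx (fun r hr y _ => ?_) (fun y z hy hz => ?_)
  · rw [map_smul]
    exact Submodule.smul_mem_smul hr Submodule.mem_top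
  · rw [map_add]
    exact Submodule.add_mem _ hy hz

lemma d_mem' (A : Rep R G) (I : Ideal R) (n : ℕ) (c : (Fin n → G) → A)
    (hc : ∀ g, c g ∈ I • (⊤ : Submodule R A)) (g : Fin (n+1) → G) :
    inhomogeneousCochains.d A n c g ∈ I • (⊤ : Submodule R A) := by
  rw [inhomogeneousCochains.d_hom_apply]
  exact Submodule.add_mem _ (rho_smul_top_mem' A I _ (hc _))
    (Submodule.sum_mem _ fun j _ => Submodule.smul_mem _ _ (hc _))

lemma d_comm' {A B : Rep R G} (φ : A ⟶ B) (n : ℕ) (c : (Fin n → G) → A) :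
    inhomogeneousCochains.d B n (φ.hom ∘ c) = φ.hom ∘ inhomogeneousCochains.d A n c := by
  funext g
  simp only [inhomogeneousCochains.d_hom_apply, Function.comp_apply, map_add, map_sum, map_smul]
  congr 1
  exact (Rep.hom_comm_apply φ _ _).symm

lemma d_d (A : Rep R G) (i : ℕ) (b : (Fin (i-1) → G) → A) :
    inhomogeneousCochains.d A i ((inhomogeneousCochains A).d (i-1) i b) = 0 := by
  calc inhomogeneousCochains.d A i ((inhomogeneousCochains A).d (i-1) i b)
      = (inhomogeneousCochains A).d i (i+1) ((inhomogeneousCochains A).d (i-1) i b) :=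
        (ConcreteCategory.congr_hom (inhomogeneousCochains.d_def A i) _).symm
    _ = ((inhomogeneousCochains A).d (i-1) i ≫ (inhomogeneousCochains A).d i (i+1)) b :=
        (CategoryTheory.comp_apply _ _ _).symm
    _ = (0 : (inhomogeneousCochains A).X (i-1) ⟶ (inhomogeneousCochains A).X (i+1)) b := by
        rw [(inhomogeneousCochains A).d_comp_d]
    _ = 0 := rfl

lemma D_comm {A B : Rep R G} (φ : A ⟶ B) (a b : ℕ) (x : (Fin a → G) → A) :
    (inhomogeneousCochains B).d a b (φ.hom ∘ x) =
      φ.hom ∘ (inhomogeneousCochains A).d a b x := by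
  by_cases h : a + 1 = b
  · subst h
    rw [ConcreteCategory.congr_hom (inhomogeneousCochains.d_def B a) (φ.hom ∘ x),
      ConcreteCategory.congr_hom (inhomogeneousCochains.d_def A a) x]
    exact d_comm' φ a x
  · rw [HomologicalComplex.shape _ _ _ (by simpa using h),
      HomologicalComplex.shape _ _ _ (by simpa using h)]
    funext g
    show (0 : ((Fin b → G) → B)) g = φ.hom ((0 : ((Fin b → G) → A)) g)
    simp

lemma D_mem (A : Rep R G) (I : Ideal R) (a b : ℕ) (x : (Fin a → G) → A)
    (hx : ∀ g, x g ∈ I • (⊤ : Submodule R A)) (g : Fin b → G) :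
    (inhomogeneousCochains A).d a b x g ∈ I • (⊤ : Submodule R A) := by
  by_cases h : a + 1 = b
  · subst h
    rw [ConcreteCategory.congr_hom (inhomogeneousCochains.d_def A a) x]
    exact d_mem' A I a x hx g
  · rw [HomologicalComplex.shape _ _ _ (by simpa using h)]
    exact Submodule.zero_mem _

lemma main_induction [IsArtinianRing R] [IsLocalRing R] (X Y : Rep R G) {ι : Type}
    (bas : Module.Basis ι R X) (f : X ⟶ Y) (hsurj : Function.Surjective f.hom)
    (hker : LinearMap.ker f.hom.toLinearMap = (IsLocalRing.maximalIdeal R) • (⊤ : Submodule R X))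
    (i : ℕ)
    (hY : ∀ c : (Fin i → G) → Y, inhomogeneousCochains.d Y i c = 0 →
        ∃ b : (Fin (i-1) → G) → Y, (inhomogeneousCochains Y).d (i-1) i b = c)
    (J : Ideal R) :
    ∀ c : (Fin i → G) → X, (∀ g, c g ∈ J • (⊤ : Submodule R X)) →
      inhomogeneousCochains.d X i c = 0 →
      ∃ b : (Fin (i-1) → G) → X, (inhomogeneousCochains X).d (i-1) i b = c := by
  induction J using IsArtinian.induction with
  | _ J IH =>
  intro c hc hz
  by_cases hJ : J = ⊥
  · subst hJ
    have hc0 : c = 0 := funext fun g => by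
      have h := hc g
      rwa [Submodule.bot_smul, Submodule.mem_bot] at h
    exact ⟨0, by rw [map_zero, hc0]⟩
  set m := IsLocalRing.maximalIdeal R with hm
  obtain ⟨n, hn⟩ : IsNilpotent m := by
    have h := IsArtinianRing.isNilpotent_jacobson_bot (R := R)
    rwa [IsLocalRing.jacobson_eq_maximalIdeal ⊥ bot_ne_top] at h
  have hlt : m * J < J := by
    refine lt_of_le_of_ne Ideal.mul_le_right ?_
    intro heq
    apply hJ
    have hpow : ∀ k : ℕ, J ≤ m ^ k * J := by
      intro k
      induction k with
      | zero => rw [pow_zero, one_mul]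
      | succ k ih =>
        calc J ≤ m ^ k * J := ih
          _ = m ^ k * (m * J) := by rw [heq]
          _ = m ^ (k+1) * J := by ring
    have hJn := hpow n
    rw [hn, zero_mul] at hJn
    exact le_bot_iff.mp hJn
  obtain ⟨t, htJ, htm⟩ := SetLike.exists_of_lt hlt
  obtain ⟨J', -, ⟨hmJ', hJ'J, htJ'⟩, hJ'max⟩ :=
    zorn_le_nonempty₀ {K : Ideal R | m * J ≤ K ∧ K ≤ J ∧ t ∉ K}
      (fun ch hch hchain y hy =>
        ⟨sSup ch, ⟨le_trans (hch hy).1 (le_sSup hy), sSup_le fun z hz => (hch hz).2.1,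
          fun htS => by
            obtain ⟨K, hK, htK⟩ :=
              (Submodule.mem_sSup_of_directed ⟨y, hy⟩ hchain.directedOn).mp htS
            exact (hch hK).2.2 htK⟩,
          fun z hz => le_sSup hz⟩)
      (m * J) ⟨le_rfl, Ideal.mul_le_right, htm⟩
  have hdecomp : J = J' ⊔ Ideal.span {t} := by
    refine le_antisymm ?_
      (sup_le hJ'J (Ideal.span_le.mpr (Set.singleton_subset_iff.mpr htJ)))
    intro x hx
    by_cases hxJ' : x ∈ J'
    · exact Submodule.mem_sup_left hxJ'
    have hK : t ∈ J' ⊔ Ideal.span {x} := by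
      by_contra htK
      have hle : J' ⊔ Ideal.span {x} ≤ J' :=
        hJ'max ⟨le_trans hmJ' le_sup_left,
          sup_le hJ'J (Ideal.span_le.mpr (Set.singleton_subset_iff.mpr hx)), htK⟩
          le_sup_left
      exact hxJ' (hle (Submodule.mem_sup_right (Ideal.subset_span rfl)))
    obtain ⟨y, hy, z, hzmem, hyz⟩ := Submodule.mem_sup.mp hK
    obtain ⟨r, hr⟩ := Ideal.mem_span_singleton'.mp hzmem
    by_cases hrm : r ∈ m
    · exfalso
      apply htJ'
      have h1 : r * x ∈ m * J := Ideal.mul_mem_mul hrm hx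
      have hz' : z ∈ J' := hmJ' (hr ▸ h1)
      rw [← hyz]
      exact J'.add_mem hy hz'
    · have hu : IsUnit r := by
        rw [hm, IsLocalRing.mem_maximalIdeal, mem_nonunits_iff, not_not] at hrm
        exact hrm
      obtain ⟨u, hu⟩ := hu
      have h1 : r * x ∈ J' ⊔ Ideal.span {t} := by
        have heq2 : r * x = t - y := by rw [← hyz, hr]; ring
        rw [heq2]
        exact Submodule.sub_mem _ (Submodule.mem_sup_right (Ideal.subset_span rfl))
          (Submodule.mem_sup_left hy)
      have h2 : (↑u⁻¹ : R) * (r * x) ∈ J' ⊔ Ideal.span {t} := Ideal.mul_mem_left _ _ h1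
      rwa [← hu, ← mul_assoc, Units.inv_mul, one_mul] at h2
  rw [hdecomp] at hc
  choose c₀ c' hceq hc'mem using fun g => exists_decomp (hc g)
  have hdsplit : inhomogeneousCochains.d X i c =
      t • inhomogeneousCochains.d X i c₀ + inhomogeneousCochains.d X i c' := by
    have hcfun : c = t • c₀ + c' := funext hceq
    rw [hcfun, map_add, map_smul]
  have hdc0mem : ∀ g, inhomogeneousCochains.d X i c₀ g ∈ m • (⊤ : Submodule R X) := by
    intro g
    refine mem_max_smul_of_smul_mem bas htJ' ?_
    have h0 : t • inhomogeneousCochains.d X i c₀ g + inhomogeneousCochains.d X i c' g = 0 := by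
      have hg := congrFun hz g
      rw [hdsplit] at hg
      simp at hg
      exact hg.trans rfl
    rw [eq_neg_of_add_eq_zero_left h0]
    exact Submodule.neg_mem _ (d_mem' X J' i c' hc'mem g)
  have hYcoc : inhomogeneousCochains.d Y i (f.hom ∘ c₀) = 0 := by
    rw [d_comm' f i c₀]
    funext g
    have hfz : f.hom (inhomogeneousCochains.d X i c₀ g) = 0 := by
      rw [show f.hom (inhomogeneousCochains.d X i c₀ g) =
        f.hom.toLinearMap (inhomogeneousCochains.d X i c₀ g) from rfl, ← LinearMap.mem_ker, hker]
      exact hdc0mem g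
    exact hfz
  obtain ⟨bY, hbY⟩ := hY (f.hom ∘ c₀) hYcoc
  obtain ⟨b₀, hb₀⟩ : ∃ b₀ : (Fin (i-1) → G) → X, ∀ g, f.hom (b₀ g) = bY g := by
    choose b₀ hb₀ using fun g => hsurj (bY g)
    exact ⟨b₀, hb₀⟩
  have hb₀' : f.hom ∘ b₀ = bY := funext hb₀
  obtain ⟨Db₀, hDb₀⟩ : ∃ Db₀ : (Fin i → G) → X,
      Db₀ = (inhomogeneousCochains X).d (i-1) i b₀ := ⟨_, rfl⟩
  have hc₂mem : ∀ g, (c g - t • Db₀ g) ∈ J' • (⊤ : Submodule R X) := by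
    intro g
    have heq3 : c g - t • Db₀ g = t • (c₀ g - Db₀ g) + c' g := by
      rw [hceq g, smul_sub]
      abel
    rw [heq3]
    refine Submodule.add_mem _ ?_ (hc'mem g)
    refine smul_mem_of_mem_max_smul (fun a ha => hmJ' ?_) ?_
    · rw [mul_comm t a]
      exact Ideal.mul_mem_mul ha htJ
    · rw [← hker, LinearMap.mem_ker, map_sub]
      have h1 : f.hom (Db₀ g) = f.hom (c₀ g) := by
        have h2 : f.hom ∘ Db₀ = f.hom ∘ c₀ := by
          rw [hDb₀, ← D_comm f (i-1) i b₀, hb₀', hbY]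
        exact congrFun h2 g
      rw [sub_eq_zero]
      exact h1.symm
  have hc₂z : inhomogeneousCochains.d X i (fun g => c g - t • Db₀ g) = 0 := by
    have heq4 : (fun g => c g - t • Db₀ g) = c - t • Db₀ := rfl
    rw [heq4, map_sub, map_smul, hz, hDb₀, d_d X i b₀, smul_zero, sub_zero]
  have hJ'lt : J' < J := lt_of_le_of_ne hJ'J (fun h => htJ' (h ▸ htJ))
  obtain ⟨b₂, hb₂⟩ := IH J' hJ'lt (fun g => c g - t • Db₀ g) hc₂mem hc₂z
  refine ⟨t • b₀ + b₂, ?_⟩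
  rw [map_add, map_smul, hb₂, ← hDb₀]
  funext g
  show t • Db₀ g + (c g - t • Db₀ g) = c g
  abel


/-- Let `R` be a commutative Artinian local ring with maximal ideal `m`,
`G` a group and `X` a representation of `G` over `R` whose underlying `R`-module is free.
If `H^i(G, X/mX)` vanishes then `H^i(G, X)` vanishes.  Here the quotient `X/mX` is
formalized as any representation `Y` equipped with a `G`-equivariant surjection `f : X ⟶ Y`
whose kernel is `m • X`. -/
theorem stmt0 (R : Type) [CommRing R] [IsArtinianRing R] [IsLocalRing R]
    (G : Type) [Group G] (X Y : Rep R G) [Module.Free R X]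
    (f : X ⟶ Y) (hsurj : Function.Surjective f.hom)
    (hker : LinearMap.ker f.hom.toLinearMap = (IsLocalRing.maximalIdeal R) • (⊤ : Submodule R X))
    (i : ℕ) (hvan : Subsingleton (groupCohomology Y i)) :
    Subsingleton (groupCohomology X i) := by
  rw [subsingleton_iff_exactAt, exactAt_iff_concrete] at hvan ⊢
  intro c hc
  exact main_induction X Y (Module.Free.chooseBasis R X) f hsurj hker i hvan ⊤ c
    (fun g => by rw [Submodule.top_smul]; exact Submodule.mem_top) hc
end DLemmas
end

section
/- Let O be a discrete valuation ring with uniformizer ϖ, let G be a group, and let T be an O-module that is finitely generated and free over O and is equipped with an O-linear action of G. If the group cohomology H^0(G, T/ϖT) vanishes, then H^0(G, T) vanishes and the O-module H^1(G, T) is torsion-free. -/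
/-- Let `O` be a discrete valuation ring with uniformizer `ϖ`, `G` a group
and `T` a representation of `G` over `O` that is finitely generated and free as an `O`-module.
If `H^0(G, T/ϖT)` vanishes then `H^0(G, T)` vanishes and `H^1(G, T)` is a torsion-free
`O`-module.  Here the quotient `T/ϖT` is formalized as any representation `Tbar` equipped
with a `G`-equivariant surjection `f : T ⟶ Tbar` whose kernel is `ϖ • T`. -/
theorem stmt2 (O : Type) [CommRing O] [IsDomain O] [IsDiscreteValuationRing O]
    (ϖ : O) (hϖ : Irreducible ϖ)
    (G : Type) [Group G] (T Tbar : Rep O G)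
    [Module.Free O T] [Module.Finite O T]
    (f : T ⟶ Tbar) (hsurj : Function.Surjective f.hom)
    (hker : LinearMap.ker f.hom.toLinearMap = Ideal.span {ϖ} • (⊤ : Submodule O T))
    (h0 : Subsingleton (groupCohomology Tbar 0)) :
    Subsingleton (groupCohomology T 0) ∧
      NoZeroSMulDivisors O (groupCohomology T 1) := by
  have hϖ0 : ϖ ≠ 0 := hϖ.ne_zero
  -- invariants of Tbar vanish
  have hTbar0 : Subsingleton Tbar.ρ.invariants :=
    Equiv.subsingleton ((groupCohomology.H0Iso Tbar).symm.toLinearEquiv.toEquiv)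
  have hTbarInv : ∀ y : Tbar, (∀ g : G, Tbar.ρ g y = y) → y = 0 := by
    intro y hy
    have : (⟨y, hy⟩ : Tbar.ρ.invariants) = ⟨0, fun g => map_zero _⟩ := Subsingleton.elim _ _
    exact congrArg Subtype.val this
  -- key step: an invariant element of T is ϖ times an invariant element
  have hstep : ∀ x : T, (∀ g : G, T.ρ g x = x) → ∃ y : T, (∀ g : G, T.ρ g y = y) ∧ x = ϖ • y := by
    intro x hx
    have hfx : f.hom x = 0 := by
      apply hTbarInv
      intro g
      rw [← Rep.hom_comm_apply, hx]
    have hxk : x ∈ LinearMap.ker f.hom.toLinearMap := hfx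
    rw [hker, Submodule.ideal_span_singleton_smul] at hxk
    obtain ⟨y, -, hy⟩ := Set.mem_smul_set.mp hxk
    refine ⟨y, fun g => ?_, hy.symm⟩
    have : ϖ • T.ρ g y = ϖ • y := by
      rw [← map_smul, hy, hx]
    exact smul_right_injective T hϖ0 this
  -- invariants of T vanish
  have hTInv : ∀ x : T, (∀ g : G, T.ρ g x = x) → x = 0 := by
    intro x hx
    have hmem : ∀ n : ℕ, x ∈ (Ideal.span {ϖ}) ^ n • (⊤ : Submodule O T) := by
      have key : ∀ n : ℕ, ∀ x : T, (∀ g : G, T.ρ g x = x) →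
          x ∈ (Ideal.span {ϖ}) ^ n • (⊤ : Submodule O T) := by
        intro n
        induction n with
        | zero => intro x _; simp
        | succ n ih =>
          intro x hx
          obtain ⟨y, hyinv, rfl⟩ := hstep x hx
          have hy' := ih y hyinv
          rw [pow_succ', mul_smul, Submodule.ideal_span_singleton_smul]
          exact Submodule.smul_mem_pointwise_smul y ϖ _ hy'
      exact fun n => key n x hx
    have hbot := Ideal.iInf_pow_smul_eq_bot_of_isLocalRing (R := O) (M := T)
      (I := Ideal.span {ϖ})
      (fun h => hϖ.not_isUnit (Ideal.span_singleton_eq_top.mp h))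
    have : x ∈ (⊥ : Submodule O T) := by
      rw [← hbot]
      exact Submodule.mem_iInf _ |>.mpr hmem
    simpa using this
  constructor
  · -- H0(T) = 0
    have : Subsingleton T.ρ.invariants := by
      constructor
      rintro ⟨a, ha⟩ ⟨b, hb⟩
      exact Subtype.ext (show a = b by rw [hTInv a ha, hTInv b hb])
    exact @Equiv.subsingleton _ _ ((groupCohomology.H0Iso T).toLinearEquiv.toEquiv) this
  · -- H1(T) torsion-free
    -- multiplication by ϖ is injective on H1
    have hϖinj : ∀ x : groupCohomology.H1 T, ϖ • x = 0 → x = 0 := by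
      intro x hx
      obtain ⟨z, rfl⟩ : ∃ z, groupCohomology.H1π T z = x :=
        groupCohomology.H1_induction_on x (fun z => ⟨z, rfl⟩)
      rw [← map_smul, groupCohomology.H1π_eq_zero_iff] at hx
      obtain ⟨t, ht'⟩ := hx
      have ht : ∀ g, T.ρ g t - t = (ϖ • (z : G → T)) g := fun g => by
        have := congrFun ht' g
        rw [groupCohomology.d₀₁_hom_apply] at this
        exact this
      have hft : f.hom t = 0 := by
        apply hTbarInv
        intro g
        have h1 : T.ρ g t - t = ϖ • (z : G → T) g := by
          have := ht g
          simpa using this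
        have h2 : f.hom (T.ρ g t - t) = 0 := by
          rw [h1]
          have : ϖ • (z : G → T) g ∈ LinearMap.ker f.hom.toLinearMap := by
            rw [hker, Submodule.ideal_span_singleton_smul]
            exact Submodule.smul_mem_pointwise_smul _ ϖ ⊤ trivial
          exact this
        rw [map_sub, Rep.hom_comm_apply, sub_eq_zero] at h2
        exact h2
      have htk : t ∈ LinearMap.ker f.hom.toLinearMap := hft
      rw [hker, Submodule.ideal_span_singleton_smul] at htk
      obtain ⟨s₀, -, hs₀⟩ := Set.mem_smul_set.mp htk
      obtain ⟨s, hs⟩ : ∃ s : T, ϖ • s = t := ⟨s₀, hs₀⟩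
      rw [groupCohomology.H1π_eq_zero_iff]
      refine ⟨s, funext fun g => ?_⟩
      rw [groupCohomology.d₀₁_hom_apply]
      have h2 := ht g
      rw [← hs] at h2
      have h1 : ϖ • (T.ρ g s - s) = ϖ • (z : G → T) g := by
        rw [smul_sub, ← map_smul]
        exact h2
      exact smul_right_injective T hϖ0 h1
    have hpow : ∀ n : ℕ, ∀ x : groupCohomology.H1 T, ϖ ^ n • x = 0 → x = 0 := by
      intro n
      induction n with
      | zero => intro x hx; simpa using hx
      | succ n ih =>
        intro x hx
        rw [pow_succ, mul_smul] at hx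
        exact hϖinj x (ih _ hx)
    have hH1 : NoZeroSMulDivisors O (groupCohomology.H1 T) := by
      constructor
      intro c x hcx
      by_cases hc : c = 0
      · exact Or.inl hc
      · right
        obtain ⟨n, u, hcu⟩ := IsDiscreteValuationRing.eq_unit_mul_pow_irreducible hc hϖ
        apply hpow n
        have : ((↑u⁻¹ : O) * c) • x = 0 := by rw [mul_smul, hcx, smul_zero]
        rwa [hcu, ← mul_assoc, Units.inv_mul, one_mul] at this
    have e : (groupCohomology T 1 : Type) ≃ₗ[O] groupCohomology.H1 T :=
      LinearEquiv.refl O _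
    constructor
    intro c x hcx
    have h' : c • e x = 0 := by rw [← map_smul, hcx, map_zero]
    rcases eq_zero_or_eq_zero_of_smul_eq_zero h' with h | h
    · exact Or.inl h
    · refine Or.inr (e.injective ?_)
      rw [h, map_zero]
end

section
/- Let p be a prime number with p ≥ 5. Consider the action of SL₂(ℤ_p) on (ℤ/pℤ)² obtained by composing the reduction homomorphism SL₂(ℤ_p) → SL₂(ℤ/pℤ) (induced by the ring map ℤ_p → ℤ/pℤ) with the standard action of SL₂(ℤ/pℤ) by matrix-vector multiplication. Then the first group cohomology H¹(SL₂(ℤ_p), (ℤ/pℤ)²) vanishes. -/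
/-- The action of `SL₂(ℤ_p)` on `(ℤ/pℤ)²` obtained by composing reduction modulo `p`
with the standard action of `SL₂(ℤ/pℤ)` by matrix-vector multiplication. -/
noncomputable def stdModpRep (p : ℕ) [Fact p.Prime] :
    Representation (ZMod p) (Matrix.SpecialLinearGroup (Fin 2) ℤ_[p]) (Fin 2 → ZMod p) :=
  (LinearEquiv.automorphismGroup.toLinearMapMonoidHom (R := ZMod p)
      (M := Fin 2 → ZMod p)).comp
    ((Matrix.SpecialLinearGroup.toLin').comp
      (Matrix.SpecialLinearGroup.map (PadicInt.toZMod (p := p))))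

lemma stdModpRep_neg_one (p : ℕ) [Fact p.Prime] (v : Fin 2 → ZMod p)
    (w : Matrix.SpecialLinearGroup (Fin 2) ℤ_[p]) (hw : (w : Matrix (Fin 2) (Fin 2) ℤ_[p]) = -1) :
    stdModpRep p w v = -v := by
  simp only [stdModpRep, MonoidHom.comp_apply,
    LinearEquiv.automorphismGroup.toLinearMapMonoidHom_apply]
  have h1 : ((Matrix.SpecialLinearGroup.map (PadicInt.toZMod (p := p)) w :
      Matrix (Fin 2) (Fin 2) (ZMod p))) = -1 := by
    rw [Matrix.SpecialLinearGroup.map_apply_coe]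
    simp only [RingHom.mapMatrix_apply, hw]
    ext i j
    simp [Matrix.map_apply, Matrix.one_apply, apply_ite]
  rw [show ((Matrix.SpecialLinearGroup.toLin'
      (Matrix.SpecialLinearGroup.map (PadicInt.toZMod (p := p)) w)) :
      (Fin 2 → ZMod p) →ₗ[ZMod p] (Fin 2 → ZMod p)) v = _ from
    Matrix.SpecialLinearGroup.toLin'_apply _ v]
  rw [Matrix.toLin'_apply, h1, Matrix.neg_mulVec, Matrix.one_mulVec]

/-- For a prime `p ≥ 5`, the first group cohomology
`H¹(SL₂(ℤ_p), (ℤ/pℤ)²)` vanishes, where `SL₂(ℤ_p)` acts on `(ℤ/pℤ)²` through reduction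
modulo `p` followed by matrix-vector multiplication. -/
theorem stmt5 (p : ℕ) [Fact p.Prime] (hp : 5 ≤ p) :
    Subsingleton (groupCohomology (Rep.of (stdModpRep p)) 1) := by
  set A := Rep.of (stdModpRep p) with hA
  have h2ne : ((-2 : ZMod p)) ≠ 0 := by
    rw [neg_ne_zero]
    have : ((2 : ℕ) : ZMod p) ≠ 0 := by
      rw [Ne, ZMod.natCast_eq_zero_iff]
      intro h
      have := Nat.le_of_dvd (by norm_num) h
      omega
    simpa using this
  have key : ∀ f : groupCohomology.cocycles₁ A, ⇑f ∈ groupCohomology.coboundaries₁ A := by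
    intro f
    have hdet : (-1 : Matrix (Fin 2) (Fin 2) ℤ_[p]).det = 1 := by
      simp [Matrix.det_neg]
    set w : Matrix.SpecialLinearGroup (Fin 2) ℤ_[p] := ⟨-1, hdet⟩ with hwdef
    have hcoe : (w : Matrix (Fin 2) (Fin 2) ℤ_[p]) = -1 := rfl
    have hρw : ∀ v : Fin 2 → ZMod p, A.ρ w v = -v := fun v =>
      stdModpRep_neg_one p v w hcoe
    have hcomm : ∀ g : Matrix.SpecialLinearGroup (Fin 2) ℤ_[p], w * g = g * w := by
      intro g
      apply Subtype.ext
      simp [hcoe]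
    have hf := (groupCohomology.mem_cocycles₁_iff (A := A) f).1 f.2
    refine ⟨(-2 : ZMod p)⁻¹ • f w, funext fun g => ?_⟩
    rw [groupCohomology.d₀₁_hom_apply]
    have heq : A.ρ g (f w) - f w = (-2 : ZMod p) • f g := by
      have h1 := hf w g
      have h2 := hf g w
      rw [hcomm g, h2, hρw] at h1
      have : A.ρ g (f w) - f w = -(f g) - f g := by linear_combination (norm := module) h1
      rw [this]
      module
    rw [map_smul, ← smul_sub, heq, smul_smul, inv_mul_cancel₀ h2ne, one_smul]
  have : Subsingleton (groupCohomology.H1 A) := by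
    refine subsingleton_of_forall_eq 0 fun x => ?_
    exact groupCohomology.H1_induction_on x fun y => (groupCohomology.H1π_eq_zero_iff y).2 (key y)
  exact this
end

section
/- Let O be the valuation ring of a finite field extension of ℚ_p, let G be a finite abelian group, and let X₁ ⊆ X₂ be finitely generated O[G]-modules (X₁ an O[G]-submodule of X₂) such that the quotient X₂/X₁ is torsion-free as an O-module. Then the restriction map Hom_{O[G]}(X₂, O[G]) → Hom_{O[G]}(X₁, O[G]), sending a homomorphism to its restriction to X₁, is surjective. -/
/-- Let `O` be the valuation ring (integral closure of `ℤ_p`) of a finite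
extension `Q` of `ℚ_p` and `G` a finite abelian group.  Let `X₁ ⊆ X₂` be finitely generated
`O[G]`-modules such that the quotient `X₂/X₁` is torsion-free over `O` (formalized as:
`c • x ∈ X₁` with `c ≠ 0` implies `x ∈ X₁`).  Then restriction
`Hom_{O[G]}(X₂, O[G]) → Hom_{O[G]}(X₁, O[G])` is surjective. -/
theorem stmt9 (p : ℕ) [Fact p.Prime]
    (Q : Type) [Field Q] [Algebra ℚ_[p] Q] [FiniteDimensional ℚ_[p] Q]
    (O : Type) [CommRing O] [Algebra O Q] [Algebra ℤ_[p] O] [Algebra ℤ_[p] Q]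
    [IsScalarTower ℤ_[p] O Q] [IsScalarTower ℤ_[p] ℚ_[p] Q]
    [IsIntegralClosure O ℤ_[p] Q]
    (G : Type) [CommGroup G] [Fintype G]
    (X₂ : Type) [AddCommGroup X₂] [Module (MonoidAlgebra O G) X₂]
    [Module.Finite (MonoidAlgebra O G) X₂]
    [Module O X₂] [IsScalarTower O (MonoidAlgebra O G) X₂]
    (X₁ : Submodule (MonoidAlgebra O G) X₂) (hX₁ : X₁.FG)
    (htf : ∀ (c : O) (x : X₂), c ≠ 0 → c • x ∈ X₁ → x ∈ X₁) :
    Function.Surjective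
      (fun f : X₂ →ₗ[MonoidAlgebra O G] MonoidAlgebra O G => f ∘ₗ X₁.subtype) := by
  classical
  haveI : IsDomain O := (IsIntegralClosure.algebraMap_injective O ℤ_[p] Q).isDomain _
  haveI : IsDedekindDomain O := IsIntegralClosure.isDedekindDomain ℤ_[p] ℚ_[p] Q O
  haveI : Algebra.IsIntegral ℤ_[p] O := IsIntegralClosure.isIntegral_algebra ℤ_[p] Q
  -- O is a PID
  have hpinj : Function.Injective (algebraMap ℤ_[p] O) := by
    have h3 : Function.Injective (algebraMap ℤ_[p] Q) := by
      rw [IsScalarTower.algebraMap_eq ℤ_[p] ℚ_[p] Q]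
      exact (algebraMap ℚ_[p] Q).injective.comp (IsFractionRing.injective ℤ_[p] ℚ_[p])
    rw [IsScalarTower.algebraMap_eq ℤ_[p] O Q] at h3
    exact Function.Injective.of_comp h3
  haveI : IsPrincipalIdealRing O := by
    apply IsPrincipalIdealRing.of_finite_primes
    set J : Ideal O := Ideal.span {algebraMap ℤ_[p] O (p : ℤ_[p])} with hJdef
    have hJ : J ≠ 0 := by
      simp only [hJdef, Ne, Ideal.span_singleton_eq_bot]
      intro h
      exact (NeZero.ne (p : ℤ_[p])) (hpinj (by simpa using h))
    have hfin := Ideal.finite_factors hJ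
    refine Set.Finite.subset (Set.Finite.insert ⊥ (hfin.image
      (fun v : IsDedekindDomain.HeightOneSpectrum O => v.asIdeal))) ?_
    rintro I hI
    rcases eq_or_ne I ⊥ with rfl | hne
    · exact Set.mem_insert _ _
    · refine Set.mem_insert_iff.mpr (Or.inr ?_)
      refine ⟨⟨I, hI, hne⟩, ?_, rfl⟩
      have hIp : (I.comap (algebraMap ℤ_[p] O)).IsPrime := hI.comap _
      have hcne : I.comap (algebraMap ℤ_[p] O) ≠ ⊥ := by
        obtain ⟨x, hxI, hx0⟩ := Submodule.exists_mem_ne_zero_of_ne_bot hne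
        exact Ideal.comap_ne_bot_of_integral_mem hx0 hxI (Algebra.IsIntegral.isIntegral x)
      obtain ⟨c, hcI, hc0⟩ := Submodule.exists_mem_ne_zero_of_ne_bot hcne
      obtain ⟨n, u, rfl⟩ :=
        IsDiscreteValuationRing.eq_unit_mul_pow_irreducible hc0 PadicInt.irreducible_p
      have hpn : ((p : ℤ_[p]) ^ n) ∈ I.comap (algebraMap ℤ_[p] O) := by
        have : (↑u⁻¹ * (↑u * (p : ℤ_[p]) ^ n)) ∈ I.comap (algebraMap ℤ_[p] O) :=
          Ideal.mul_mem_left _ _ hcI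
        rwa [← mul_assoc, Units.inv_mul, one_mul] at this
      have hp1 : (p : ℤ_[p]) ∈ I.comap (algebraMap ℤ_[p] O) := hIp.mem_of_pow_mem n hpn
      show _ ∣ J
      rw [Ideal.dvd_iff_le, hJdef, Ideal.span_le, Set.singleton_subset_iff]
      exact hp1
  -- X₂ is finite over O
  haveI : Module.Finite O (MonoidAlgebra O G) := by
    exact Module.Finite.equiv (MonoidAlgebra.coeffLinearEquiv O).symm
  haveI : Module.Finite O X₂ := Module.Finite.trans (MonoidAlgebra O G) X₂
  -- The quotient by X₁ as O-module is free
  set X₁O : Submodule O X₂ := X₁.restrictScalars O with hX₁O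
  haveI : NoZeroSMulDivisors O (X₂ ⧸ X₁O) := by
    refine ⟨fun {c y} h => ?_⟩
    rcases eq_or_ne c 0 with rfl | hc
    · exact Or.inl rfl
    · refine Or.inr ?_
      obtain ⟨x, rfl⟩ := Submodule.Quotient.mk_surjective X₁O y
      rw [← Submodule.Quotient.mk_smul, Submodule.Quotient.mk_eq_zero] at h
      rw [Submodule.Quotient.mk_eq_zero]
      exact htf c x hc h
  haveI : Module.Free O (X₂ ⧸ X₁O) := Module.free_of_finite_type_torsion_free'
  -- a retraction X₂ → X₁ as O-modules
  obtain ⟨s, hs⟩ := Module.projective_lifting_property X₁O.mkQ (LinearMap.id)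
    (Submodule.mkQ_surjective X₁O)
  have hmem : ∀ x : X₂, x - s (X₁O.mkQ x) ∈ X₁O := by
    intro x
    rw [← Submodule.Quotient.mk_eq_zero, ← Submodule.mkQ_apply, map_sub]
    have := congrFun (congrArg DFunLike.coe hs) (X₁O.mkQ x)
    simp only [LinearMap.coe_comp, Function.comp_apply, LinearMap.id_coe, id_eq] at this
    rw [this, sub_self]
  set r : X₂ →ₗ[O] X₁O :=
    (LinearMap.id - s ∘ₗ X₁O.mkQ).codRestrict X₁O (fun x => by simpa using hmem x) with hr
  have hrid : ∀ x : X₂, x ∈ X₁O → ((r x : X₂)) = x := by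
    intro x hx
    have h0 : X₁O.mkQ x = 0 := (Submodule.Quotient.mk_eq_zero X₁O).mpr hx
    have h1 : s (X₁O.mkQ x) = 0 := by rw [h0, map_zero]
    simp only [Submodule.mkQ_apply] at h1
    simp [hr, LinearMap.codRestrict, h1]
  -- the inclusion X₁O →ₗ[O] X₁
  set ι : X₁O →ₗ[O] X₁ :=
    { toFun := fun y => ⟨y.1, y.2⟩
      map_add' := fun _ _ => rfl
      map_smul' := fun _ _ => rfl } with hι
  -- main construction
  intro f
  set ψ : X₂ →ₗ[O] O :=
    (Finsupp.lapply (1 : G)) ∘ₗ (MonoidAlgebra.coeffLinearEquiv O).toLinearMap ∘ₗ ((f.restrictScalars O) ∘ₗ ι) ∘ₗ r with hψ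
  set Fn : X₂ → MonoidAlgebra O G :=
    fun x => ∑ g : G, MonoidAlgebra.single g (ψ (MonoidAlgebra.single g⁻¹ (1 : O) • x)) with hFn
  have Fadd : ∀ x y, Fn (x + y) = Fn x + Fn y := by
    intro x y
    simp [hFn, smul_add, Finsupp.single_add, Finset.sum_add_distrib]
  have Fosmul : ∀ (c : O) x, Fn (c • x) = c • Fn x := by
    intro c x
    have h : ∀ g : G, MonoidAlgebra.single g⁻¹ (1 : O) • (c • x)
        = c • (MonoidAlgebra.single g⁻¹ (1 : O) • x) := fun g => smul_comm _ _ _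
    simp [hFn, h, map_smul, Finset.smul_sum, Finsupp.smul_single', smul_eq_mul]
  have Fg : ∀ (h : G) (x : X₂),
      Fn ((MonoidAlgebra.single h (1 : O)) • x) = MonoidAlgebra.single h (1 : O) * Fn x := by
    intro h x
    rw [hFn]
    simp only []
    rw [Finset.mul_sum]
    refine (Fintype.sum_equiv (Equiv.mulLeft h) _ _ ?_).symm
    intro k
    rw [MonoidAlgebra.single_mul_single, one_mul, ← mul_smul,
      MonoidAlgebra.single_mul_single, mul_one]
    have : ((h * k)⁻¹ * h) = k⁻¹ := by group
    rw [show (Equiv.mulLeft h) k = h * k from rfl, this]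
  set F : X₂ →ₗ[MonoidAlgebra O G] MonoidAlgebra O G :=
    { toFun := Fn
      map_add' := Fadd
      map_smul' := by
        intro a x
        simp only [RingHom.id_apply, smul_eq_mul]
        induction a using MonoidAlgebra.induction_on with
        | of g =>
          rw [MonoidAlgebra.of_apply]
          exact Fg g x
        | add a b ha hb =>
          rw [add_smul, Fadd, ha, hb, add_mul]
        | smul c a ih =>
          rw [smul_assoc, Fosmul, ih, smul_mul_assoc] } with hF
  refine ⟨F, ?_⟩
  apply LinearMap.ext
  rintro ⟨x, hx⟩
  show Fn x = f ⟨x, hx⟩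
  have hterm : ∀ g : G, ψ (MonoidAlgebra.single g⁻¹ (1 : O) • x) = (f ⟨x, hx⟩).coeff g := by
    intro g
    have hgx : MonoidAlgebra.single g⁻¹ (1 : O) • x ∈ X₁ := X₁.smul_mem _ hx
    have h1 : ψ (MonoidAlgebra.single g⁻¹ (1 : O) • x)
        = (f (ι (r (MonoidAlgebra.single g⁻¹ (1 : O) • x)))).coeff (1 : G) := rfl
    rw [h1]
    have h2 : ι (r (MonoidAlgebra.single g⁻¹ (1 : O) • x))
        = ⟨MonoidAlgebra.single g⁻¹ (1 : O) • x, hgx⟩ :=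
      Subtype.ext (hrid _ hgx)
    rw [h2]
    have h3 : (⟨MonoidAlgebra.single g⁻¹ (1 : O) • x, hgx⟩ : X₁)
        = MonoidAlgebra.single g⁻¹ (1 : O) • ⟨x, hx⟩ := Subtype.ext rfl
    rw [h3, map_smul, smul_eq_mul, MonoidAlgebra.coeff_single_mul_apply]
    simp
  rw [hFn]
  simp only [hterm]
  -- ∑ g, single g (a g) = a
  apply MonoidAlgebra.ext
  apply Finsupp.ext
  intro y
  rw [MonoidAlgebra.coeff_sum, Finsupp.finset_sum_apply]
  simp [Finsupp.single_apply]
end
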